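/- In the deterministic MDP on states {d₁,…,d_k, e, f} with transitions as described (from dᵢ: stay or go right; from e: stay or go to f; from f: forced move to d₁), the 0-diameter—the least t such that from any state distribution and any starting time, any target distribution over the states is exactly reachable in t steps by some (possibly randomized) policy—equals k + 2. -/

import Mathlib

open Finset

/-- Allowed transitions in the chain MDP with states `0,…,k-1` (the `dᵢ`), state `k` (= `e`),
and state `k+1` (= `f`). -/
def chainStep (k : ℕ) (s s' : ℕ) : Prop :=
  (s < k ∧ (s' = s ∨ s' = s + 1)) ∨ (s = k ∧ (s' = k ∨ s' = k + 1)) ∨ (s = k + 1 ∧ s' = 0)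

/-- A (one-step, possibly randomized) transition kernel supported on the allowed
transitions of the MDP. -/
def IsKernel {V : Type*} [Fintype V] (step : V → V → Prop) (K : V → V → ℝ) : Prop :=
  (∀ s s', 0 ≤ K s s') ∧ (∀ s, ∑ s', K s s' = 1) ∧ (∀ s s', 0 < K s s' → step s s')

/-- Evolution of a state distribution under a sequence of kernels. -/
def evolve {V : Type*} [Fintype V] (K : ℕ → V → V → ℝ) (ν : V → ℝ) : ℕ → V → ℝ
  | 0 => ν
  | t + 1 => fun s' => ∑ s, evolve K ν t s * K t s s'

/-- `ν'` is (exactly) reachable from `ν` in `t` steps: some randomized policy drives the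
state distribution from `ν` to `ν'` in exactly `t` steps. -/
def ReachableIn {V : Type*} [Fintype V] (step : V → V → Prop) (ν ν' : V → ℝ) (t : ℕ) : Prop :=
  ∃ K : ℕ → V → V → ℝ, (∀ j, IsKernel step (K j)) ∧ evolve K ν t = ν'

/-- `ν` is a probability distribution. -/
def IsProbDist {V : Type*} [Fintype V] (ν : V → ℝ) : Prop :=
  (∀ s, 0 ≤ ν s) ∧ ∑ s, ν s = 1

/-- The 0-diameter: the least `t` such that every probability distribution is exactly
reachable from every other in `t` steps. -/
noncomputable def zeroDiameter {V : Type*} [Fintype V] (step : V → V → Prop) : ℕ :=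
  sInf {t | ∀ ν ν' : V → ℝ, IsProbDist ν → IsProbDist ν' → ReachableIn step ν ν' t}

/- ### Auxiliary material -/

section Aux

/-- If there is a family of valid paths of length `T` between any two states, then any
probability distribution is exactly reachable from any other in `T` steps (via the
product coupling). -/
theorem reachable_of_paths {V : Type*} [Fintype V] [DecidableEq V] (step : V → V → Prop) (T : ℕ)
    (D : V → V → ℝ) (hD : IsKernel step D)
    (P : V → V → ℕ → V)
    (h0 : ∀ s s', P s s' 0 = s) (hT : ∀ s s', P s s' T = s')
    (hstep : ∀ s s' t, t < T → step (P s s' t) (P s s' (t + 1)))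
    (ν ν' : V → ℝ) (hν : IsProbDist ν) (hν' : IsProbDist ν') :
    ReachableIn step ν ν' T := by
  classical
  set μ : ℕ → V → ℝ := fun t x => ∑ s, ∑ s', ν s * ν' s' * (if P s s' t = x then 1 else 0) with hμ
  set num : ℕ → V → V → ℝ := fun t x y =>
    ∑ s, ∑ s', ν s * ν' s' * (if P s s' t = x ∧ P s s' (t + 1) = y then 1 else 0) with hnum
  have hμnn : ∀ t x, 0 ≤ μ t x := by
    intro t x
    refine Finset.sum_nonneg fun s _ => Finset.sum_nonneg fun s' _ => ?_
    have := hν.1 s; have := hν'.1 s'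
    positivity
  have hnumnn : ∀ t x y, 0 ≤ num t x y := by
    intro t x y
    refine Finset.sum_nonneg fun s _ => Finset.sum_nonneg fun s' _ => ?_
    have := hν.1 s; have := hν'.1 s'
    positivity
  have hnumle : ∀ t x y, num t x y ≤ μ t x := by
    intro t x y
    refine Finset.sum_le_sum fun s _ => Finset.sum_le_sum fun s' _ => ?_
    have h1 := hν.1 s; have h2 := hν'.1 s'
    have : (if P s s' t = x ∧ P s s' (t + 1) = y then (1:ℝ) else 0)
        ≤ (if P s s' t = x then (1:ℝ) else 0) := by
      split_ifs with ha hb <;> simp_all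
    nlinarith [mul_nonneg h1 h2]
  have hsumnum : ∀ t x, ∑ y, num t x y = μ t x := by
    intro t x
    rw [hnum, hμ]
    rw [Finset.sum_comm]
    refine Finset.sum_congr rfl fun s _ => ?_
    rw [Finset.sum_comm]
    refine Finset.sum_congr rfl fun s' _ => ?_
    by_cases hA : P s s' t = x
    · simp [hA, Finset.sum_ite_eq]
    · simp [hA]
  have hμ0 : μ 0 = ν := by
    funext x
    simp only [hμ, h0]
    have key1 : ∀ s : V, ∑ s', ν s * ν' s' * (if s = x then (1:ℝ) else 0)
        = ν s * (if s = x then (1:ℝ) else 0) := by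
      intro s
      rw [← Finset.sum_mul, ← Finset.mul_sum, hν'.2, mul_one]
    rw [Finset.sum_congr rfl fun s _ => key1 s]
    simp [mul_ite, Finset.sum_ite_eq']
  have hμT : μ T = ν' := by
    funext x
    simp only [hμ, hT]
    have : ∀ s : V, ∑ s', ν s * ν' s' * (if s' = x then (1:ℝ) else 0) = ν s * ν' x := by
      intro s
      simp [mul_ite, Finset.sum_ite_eq']
    rw [Finset.sum_congr rfl fun s _ => this s, ← Finset.sum_mul, hν.2, one_mul]
  set K : ℕ → V → V → ℝ := fun t x y =>
    if 0 < μ t x ∧ t < T then num t x y / μ t x else D x y with hK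
  refine ⟨K, ?_, ?_⟩
  · intro j
    refine ⟨?_, ?_, ?_⟩
    · intro s s'
      simp only [hK]
      split_ifs with h
      · exact div_nonneg (hnumnn _ _ _) (hμnn _ _)
      · exact hD.1 s s'
    · intro s
      simp only [hK]
      by_cases h : 0 < μ j s ∧ j < T
      · simp only [if_pos h]
        rw [← Finset.sum_div, hsumnum, div_self (ne_of_gt h.1)]
      · simp only [if_neg h]
        exact hD.2.1 s
    · intro s s' hpos
      simp only [hK] at hpos
      split_ifs at hpos with h
      · have hnp : 0 < num j s s' := by
          have h2 := mul_pos hpos h.1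
          rwa [div_mul_cancel₀ _ (ne_of_gt h.1)] at h2
        have h1 : (∑ b : V, (0:ℝ)) < ∑ b, ∑ s'2, ν b * ν' s'2 *
            (if P b s'2 j = s ∧ P b s'2 (j+1) = s' then 1 else 0) := by
          simpa [hnum] using hnp
        obtain ⟨a, -, ha⟩ := Finset.exists_lt_of_sum_lt h1
        have h2 : (∑ c : V, (0:ℝ)) < ∑ s'2, ν a * ν' s'2 *
            (if P a s'2 j = s ∧ P a s'2 (j+1) = s' then 1 else 0) := by simpa using ha
        obtain ⟨b, -, hb⟩ := Finset.exists_lt_of_sum_lt h2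
        by_cases hc : P a b j = s ∧ P a b (j+1) = s'
        · rw [← hc.1, ← hc.2]; exact hstep a b j h.2
        · simp [hc] at hb
      · exact hD.2.2 s s' hpos
  · have key : ∀ t, t ≤ T → evolve K ν t = μ t := by
      intro t
      induction t with
      | zero => intro _; rw [hμ0]; rfl
      | succ t ih =>
        intro hle
        have htT : t < T := lt_of_lt_of_le (Nat.lt_succ_self t) hle
        funext y
        show ∑ x, evolve K ν t x * K t x y = μ (t+1) y
        rw [show (∑ x, evolve K ν t x * K t x y) = ∑ x, μ t x * K t x y from by
          rw [ih (le_of_lt htT)]]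
        have step1 : ∀ x, μ t x * K t x y = num t x y := by
          intro x
          simp only [hK]
          by_cases h : 0 < μ t x
          · simp only [if_pos (And.intro h htT)]
            rw [mul_comm, div_mul_cancel₀ _ (ne_of_gt h)]
          · have hz : μ t x = 0 := le_antisymm (not_lt.mp h) (hμnn t x)
            have hnz : num t x y = 0 :=
              le_antisymm (hz ▸ hnumle t x y) (hnumnn t x y)
            rw [hz, hnz, zero_mul]
        rw [Finset.sum_congr rfl fun x _ => step1 x]
        simp only [hnum, hμ]
        rw [Finset.sum_comm]
        refine Finset.sum_congr rfl fun s _ => ?_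
        rw [Finset.sum_comm]
        refine Finset.sum_congr rfl fun s' _ => ?_
        by_cases hB : P s s' (t+1) = y
        · simp [hB, Finset.sum_ite_eq]
        · simp [hB]
    rw [key T le_rfl, hμT]

/-- The explicit path from `s` to `s'` of length exactly `k + 2` in the chain MDP:
wait at the start state (or, if starting at `f`, first move to `0` and wait there),
then march forward around the cycle. -/
def pathPos (k s s' t : ℕ) : ℕ :=
  if s = k + 1 then (if t = 0 then k + 1 else s' - (k + 2 - t))
  else (s + (t - (k + 2 - ((s' + (k + 2) - s) % (k + 2))))) % (k + 2)

lemma pathPos_lt (k s s' t : ℕ) (hs' : s' < k + 2) : pathPos k s s' t < k + 2 := by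
  unfold pathPos
  split_ifs
  · omega
  · omega
  · exact Nat.mod_lt _ (by omega)

lemma pathPos_zero (k s s' : ℕ) (hs : s < k + 2) : pathPos k s s' 0 = s := by
  by_cases h : s = k + 1
  · rw [pathPos, if_pos h, if_pos rfl]
    omega
  · rw [pathPos, if_neg h]
    simp [Nat.zero_sub, Nat.mod_eq_of_lt hs]

lemma pathPos_last (k s s' : ℕ) (hs : s < k + 2) (hs' : s' < k + 2) :
    pathPos k s s' (k + 2) = s' := by
  by_cases h : s = k + 1
  · rw [pathPos, if_pos h, if_neg (by omega : k + 2 ≠ 0)]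
    omega
  · rw [pathPos, if_neg h]
    set d := (s' + (k + 2) - s) % (k + 2) with hd
    have hdlt : d < k + 2 := Nat.mod_lt _ (by omega)
    rw [show k + 2 - (k + 2 - d) = d from by omega, hd, Nat.add_mod_mod,
      show s + (s' + (k + 2) - s) = s' + (k + 2) from by omega,
      Nat.add_mod_right, Nat.mod_eq_of_lt hs']

lemma chainStep_rot (k m : ℕ) (hm : m < k + 2) : chainStep k m ((m + 1) % (k + 2)) := by
  rcases Nat.lt_or_ge m k with h | h
  · exact Or.inl ⟨h, Or.inr (by rw [Nat.mod_eq_of_lt (by omega)])⟩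
  · rcases Nat.eq_or_lt_of_le h with h' | h'
    · exact Or.inr (Or.inl ⟨h'.symm, Or.inr (by rw [Nat.mod_eq_of_lt (by omega)]; omega)⟩)
    · have hm1 : m = k + 1 := by omega
      exact Or.inr (Or.inr ⟨hm1, by rw [hm1]; simp⟩)

lemma chainStep_mod (k a : ℕ) : chainStep k (a % (k + 2)) ((a + 1) % (k + 2)) := by
  have h := chainStep_rot k (a % (k + 2)) (Nat.mod_lt _ (by omega))
  rwa [Nat.mod_add_mod] at h

lemma pathPos_step (k s s' t : ℕ) (hs : s < k + 2) (hs' : s' < k + 2) (ht : t < k + 2) :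
    chainStep k (pathPos k s s' t) (pathPos k s s' (t + 1)) := by
  by_cases h : s = k + 1
  · by_cases ht0 : t = 0
    · subst ht0
      have e1 : pathPos k s s' 0 = k + 1 := by rw [pathPos, if_pos h, if_pos rfl]
      have e2 : pathPos k s s' 1 = s' - (k + 2 - 1) := by
        rw [pathPos, if_pos h, if_neg one_ne_zero]
      rw [e1, e2]
      unfold chainStep
      omega
    · have e1 : pathPos k s s' t = s' - (k + 2 - t) := by rw [pathPos, if_pos h, if_neg ht0]
      have e2 : pathPos k s s' (t + 1) = s' - (k + 2 - (t + 1)) := by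
        rw [pathPos, if_pos h, if_neg (by omega : t + 1 ≠ 0)]
      rw [e1, e2]
      unfold chainStep
      omega
  · simp only [pathPos, if_neg h]
    set d := (s' + (k + 2) - s) % (k + 2) with hd
    have hdlt : d < k + 2 := Nat.mod_lt _ (by omega)
    by_cases hw : t < k + 2 - d
    · rw [show t - (k + 2 - d) = 0 from by omega, show t + 1 - (k + 2 - d) = 0 from by omega]
      rw [Nat.add_zero, Nat.mod_eq_of_lt hs]
      unfold chainStep
      omega
    · rw [show t + 1 - (k + 2 - d) = (t - (k + 2 - d)) + 1 from by omega, ← Nat.add_assoc]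
      exact chainStep_mod k (s + (t - (k + 2 - d)))

/-- The deterministic rotation kernel, used as a default/fallback kernel. -/
noncomputable def rotK (k : ℕ) : Fin (k + 2) → Fin (k + 2) → ℝ := fun x y =>
  if y.val = (x.val + 1) % (k + 2) then 1 else 0

lemma rotK_isKernel (k : ℕ) :
    IsKernel (fun s s' : Fin (k + 2) => chainStep k s.val s'.val) (rotK k) := by
  refine ⟨fun s s' => ?_, fun s => ?_, fun s s' h => ?_⟩
  · unfold rotK; split_ifs <;> norm_num
  · unfold rotK
    have hm : (s.val + 1) % (k + 2) < k + 2 := Nat.mod_lt _ (by omega)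
    rw [Finset.sum_eq_single (⟨(s.val + 1) % (k + 2), hm⟩ : Fin (k + 2))]
    · simp
    · intro b _ hb
      rw [if_neg (by simpa [Fin.ext_iff] using hb)]
    · intro hmem
      exact absurd (Finset.mem_univ _) hmem
  · unfold rotK at h
    split_ifs at h with hc
    · show chainStep k s.val s'.val
      rw [hc]; exact chainStep_rot k s.val s.isLt
    · norm_num at h

/-- Point mass at `x`. -/
noncomputable def delta {V : Type*} [Fintype V] [DecidableEq V] (x : V) : V → ℝ :=
  fun y => if y = x then 1 else 0

lemma delta_isProbDist {V : Type*} [Fintype V] [DecidableEq V] (x : V) :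
    IsProbDist (delta x) := by
  constructor
  · intro s; unfold delta; split_ifs <;> norm_num
  · unfold delta; simp

lemma evolve_nonneg {V : Type*} [Fintype V] (K : ℕ → V → V → ℝ)
    (hK : ∀ j s s', 0 ≤ K j s s') (ν : V → ℝ) (hν : ∀ s, 0 ≤ ν s) :
    ∀ t s, 0 ≤ evolve K ν t s := by
  intro t
  induction t with
  | zero => exact hν
  | succ t ih =>
    intro s
    exact Finset.sum_nonneg fun x _ => mul_nonneg (ih x) (hK t x s)

/-- Starting from the point mass at `f = k + 1`, after `t` steps (`1 ≤ t ≤ k + 1`) all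
mass lives on states `< t`; in particular none of it is back at `f`. -/
lemma support_bound (k : ℕ) (K : ℕ → Fin (k + 2) → Fin (k + 2) → ℝ)
    (hK : ∀ j, IsKernel (fun s s' : Fin (k + 2) => chainStep k s.val s'.val) (K j)) :
    ∀ t, 1 ≤ t → t ≤ k + 1 → ∀ x : Fin (k + 2),
      0 < evolve K (delta (⟨k + 1, by omega⟩ : Fin (k + 2))) t x → x.val < t := by
  intro t
  induction t with
  | zero => omega
  | succ t ih =>
    intro _ hle x hx
    have hnn := evolve_nonneg K (fun j => (hK j).1)
      (delta (⟨k + 1, by omega⟩ : Fin (k + 2))) (delta_isProbDist _).1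
    rcases Nat.eq_zero_or_pos t with ht0 | ht1
    · subst ht0
      have : evolve K (delta (⟨k + 1, by omega⟩ : Fin (k + 2))) 1 x
          = K 0 (⟨k + 1, by omega⟩ : Fin (k + 2)) x := by
        show (∑ s, delta _ s * K 0 s x) = _
        unfold delta
        simp [ite_mul, Finset.sum_ite_eq']
      rw [this] at hx
      have hc : chainStep k (k + 1) x.val := (hK 0).2.2 _ _ hx
      unfold chainStep at hc
      omega
    · obtain ⟨s, -, hs⟩ := Finset.exists_lt_of_sum_lt
        (show (∑ s : Fin (k + 2), (0:ℝ)) <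
          ∑ s, evolve K (delta (⟨k + 1, by omega⟩ : Fin (k + 2))) t s * K t s x by
          simp only [Finset.sum_const_zero]; exact hx)
      rcases mul_pos_iff.mp hs with ⟨he, hk2⟩ | ⟨he, _⟩
      · have hsv : s.val < t := ih ht1 (by omega) s he
        have hc : chainStep k s.val x.val := (hK t).2.2 _ _ hk2
        unfold chainStep at hc
        omega
      · exact absurd (hnn t s) (not_le.mpr he)

end Aux

theorem stmt5 (k : ℕ) (hk : 1 ≤ k) :
    zeroDiameter (fun s s' : Fin (k + 2) => chainStep k s.val s'.val) = k + 2 := by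
  classical
  have hmem : (k + 2) ∈ {t | ∀ ν ν' : Fin (k + 2) → ℝ, IsProbDist ν → IsProbDist ν' →
      ReachableIn (fun s s' : Fin (k + 2) => chainStep k s.val s'.val) ν ν' t} := by
    intro ν ν' hν hν'
    refine reachable_of_paths (fun s s' : Fin (k + 2) => chainStep k s.val s'.val) (k + 2)
      (rotK k) (rotK_isKernel k)
      (fun s s' t => ⟨pathPos k s.val s'.val t, pathPos_lt k s.val s'.val t s'.isLt⟩)
      ?_ ?_ ?_ ν ν' hν hν'
    · intro s s'; exact Fin.ext (pathPos_zero k s.val s'.val s.isLt)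
    · intro s s'; exact Fin.ext (pathPos_last k s.val s'.val s.isLt s'.isLt)
    · intro s s' t ht; exact pathPos_step k s.val s'.val t s.isLt s'.isLt ht
  have hlb : ∀ t ∈ {t | ∀ ν ν' : Fin (k + 2) → ℝ, IsProbDist ν → IsProbDist ν' →
      ReachableIn (fun s s' : Fin (k + 2) => chainStep k s.val s'.val) ν ν' t}, k + 2 ≤ t := by
    intro t ht
    by_contra hcon
    push_neg at hcon
    rcases Nat.eq_zero_or_pos t with ht0 | ht1
    · subst ht0
      obtain ⟨K, -, he⟩ := ht (delta (⟨0, by omega⟩ : Fin (k + 2)))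
        (delta (⟨1, by omega⟩ : Fin (k + 2))) (delta_isProbDist _) (delta_isProbDist _)
      have h0 : delta (⟨0, by omega⟩ : Fin (k + 2)) ⟨0, by omega⟩
          = delta (⟨1, by omega⟩ : Fin (k + 2)) ⟨0, by omega⟩ := congrFun he _
      simp [delta, Fin.ext_iff] at h0
    · obtain ⟨K, hKk, he⟩ := ht (delta (⟨k + 1, by omega⟩ : Fin (k + 2)))
        (delta (⟨k + 1, by omega⟩ : Fin (k + 2))) (delta_isProbDist _) (delta_isProbDist _)
      have hpos : 0 < evolve K (delta (⟨k + 1, by omega⟩ : Fin (k + 2))) t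
          ⟨k + 1, by omega⟩ := by
        rw [he]; simp [delta]
      have hlt : k + 1 < t := support_bound k K hKk t ht1 (by omega) _ hpos
      omega
  exact le_antisymm (Nat.sInf_le hmem) (le_csInf ⟨_, hmem⟩ hlb)
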